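/- For a span of sets C ← M → D regarded via the bridge-diagram correspondence, the associated linear prafunctor Σ_f ∘ Δ_g : D-Set → C-Set (where f : M → C, g : M → D) has a right adjoint given by Π_g ∘ Δ_f, and dualizing (applying the closure into the dualizing span C ← C×D → D) interchanges: the dual of the right adjoint of the span equals the transpose span D ← M → C, i.e. the usual transpose of a span factors as 'take right adjoint, then dualize'. -/

import Mathlib

universe u

open CategoryTheory

/-- The linear prafunctor `Σ_f ∘ Δ_g : D-Set → C-Set` associated to a span
`C ←f− M −g→ D`. -/
def spanFunctor {C D M : Type u} (f : M → C) (g : M → D) :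
    ((_ : D) → Type u) ⥤ ((_ : C) → Type u) where
  obj X c := Σ m : {m : M // f m = c}, X (g m.1)
  map α := fun c => TypeCat.ofHom (fun x => ⟨x.1, α (g x.1.1) x.2⟩)

/-- The conjunctive prafunctor `Π_g ∘ Δ_f : C-Set → D-Set` of the span. -/
def piFunctor {C D M : Type u} (f : M → C) (g : M → D) :
    ((_ : C) → Type u) ⥤ ((_ : D) → Type u) where
  obj Y d := ∀ m : {m : M // g m = d}, Y (f m.1)
  map α := fun d => TypeCat.ofHom (fun y m => α (f m.1) (y m))

/-- The dual of a conjunctive bicomodule: the `D`-indexed family of representables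
`Σ_{d∈D} y^{N_d}` (with `N_d` a set over `C` via `π`) is sent to the linear
functor `Y ↦ Σ_{n∈N_d} Y(π n)`. -/
def dualOfConjunctive {C D : Type u} (N : D → Type u) (π : ∀ d, N d → C) :
    ((_ : C) → Type u) ⥤ ((_ : D) → Type u) where
  obj Y d := Σ n : N d, Y (π d n)
  map α := fun d => TypeCat.ofHom (fun y => ⟨y.1, α (π d y.1) y.2⟩)

/-- for a span `C ← M → D`, the linear prafunctor `Σ_f Δ_g` has
right adjoint `Π_g Δ_f`, and the dual of this right adjoint (the conjunctive
bicomodule `Σ_{d∈D} y^{g⁻¹(d)}` over `C`) is the functor of the transpose span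
`D ← M → C`: transposition factors as 'right adjoint, then dual'. -/
theorem span_transpose_as_dual_of_right_adjoint
    (C D M : Type u) (f : M → C) (g : M → D) :
    Nonempty (spanFunctor f g ⊣ piFunctor f g) ∧
    Nonempty (dualOfConjunctive (fun d => {m : M // g m = d})
        (fun _ m => f m.1) ≅ spanFunctor g f) := by
  constructor
  · refine ⟨Adjunction.mkOfHomEquiv
      { homEquiv := fun X Y =>
          { toFun := fun α d => TypeCat.ofHom (fun x m => α (f m.1) ⟨⟨m.1, rfl⟩, cast (congrArg X m.2.symm) x⟩)
            invFun := fun β c => TypeCat.ofHom (fun p => p.1.2 ▸ (β (g p.1.1) p.2 ⟨p.1.1, rfl⟩))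
            left_inv := fun α => by
              funext c
              ext p
              obtain ⟨⟨m, rfl⟩, x⟩ := p
              rfl
            right_inv := fun β => by
              funext d
              ext x
              funext m
              obtain ⟨m, rfl⟩ := m
              rfl }
        homEquiv_naturality_left_symm := fun {X X' Y} u α => by
          funext c
          ext p
          obtain ⟨⟨m, rfl⟩, x⟩ := p
          rfl
        homEquiv_naturality_right := fun {X Y Y'} α u => by
          funext d
          ext x m
          rfl }⟩
  · exact ⟨Iso.refl _⟩
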